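/- In the construction for Rohlin's Lemma for isometries: let A be a finite metric space, f a partial isometry (defined on A with values in a metric space containing A ∪ f[A]) with δ = min{d(x, f(y)) : x, y ∈ A} > 0 and Δ = diam(A ∪ f[A]), and let F be a cyclic order of size s with δ·(s−2) ≥ Δ. Define on B = A × F the weighted-graph metric D induced by edge weights ρ(a•x, b•x) = d(a,b), ρ(a•x, b•x⁺) = d(a, f(b)), ρ(a•x⁻, b•x) = d(f(a), b). Then D(a•x, b•x) = d(a, b) and D(a•x, b•x⁺) = d(a, f(b)) for all a, b ∈ A and x ∈ F, and the map g(a•x) = a•x⁺ is an isometry of (B, D) with g^s = identity. -/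

import Mathlib

/-- The edge weights `ρ` on `B = A × F` (with `F` the cyclic order `ZMod s`):
`ρ(a•x, b•x) = d(a,b)`, `ρ(a•x, b•x⁺) = d(a, f b)`, `ρ(a•x, b•x⁻) = d(f a, b)`. -/
noncomputable def rho {X : Type*} [MetricSpace X] (A : Set X) (f : A → X) (s : ℕ)
    (p q : A × ZMod s) : ℝ :=
  if q.2 = p.2 then dist (p.1 : X) (q.1 : X)
  else if q.2 = p.2 + 1 then dist (p.1 : X) (f q.1)
  else if q.2 = p.2 - 1 then dist (f p.1) (q.1 : X)
  else 0

/-- Consecutive points of a path may change their `F`-coordinate by at most one step. -/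
def stepAdm {X : Type*} (A : Set X) (s : ℕ) (p q : A × ZMod s) : Prop :=
  q.2 = p.2 ∨ q.2 = p.2 + 1 ∨ q.2 = p.2 - 1

/-- The length of a path: the sum of `ρ` over consecutive pairs. -/
noncomputable def pathLen {X : Type*} [MetricSpace X] (A : Set X) (f : A → X) (s : ℕ) :
    List (A × ZMod s) → ℝ
  | [] => 0
  | [_] => 0
  | p :: q :: rest => rho A f s p q + pathLen A f s (q :: rest)

/-- The weighted-graph metric `D` on `B = A × ZMod s`: the infimum of lengths of admissible
paths connecting two points. -/
noncomputable def graphDist {X : Type*} [MetricSpace X] (A : Set X) (f : A → X) (s : ℕ)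
    (p q : A × ZMod s) : ℝ :=
  sInf {r : ℝ | ∃ c : List (A × ZMod s), c.head? = some p ∧ c.getLast? = some q ∧
    List.Chain' (stepAdm A s) c ∧ pathLen A f s c = r}

set_option linter.unusedSectionVars false

section AuxRohlin

variable {X : Type*} [MetricSpace X] (A : Set X) [Fintype A] [Nonempty A] (f : A → X)

/-- Monotone positive potential with `k+1` steps. -/
noncomputable def PposR : ℕ → A → A → ℝ
  | 0, c, b => dist (c : X) (f b)
  | (k+1), c, b => ⨅ e : A, (dist (c : X) (f e) + PposR k e b)

/-- Monotone negative potential with `k+1` steps. -/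
noncomputable def NnegR : ℕ → A → A → ℝ
  | 0, c, b => dist (f c) (b : X)
  | (k+1), c, b => ⨅ e : A, (dist (f c) (e : X) + NnegR k e b)

/-- The potential for net lift displacement `k : ℤ`. -/
noncomputable def PsiR : ℤ → A → A → ℝ
  | Int.ofNat 0, c, b => dist (c : X) (b : X)
  | Int.ofNat (k+1), c, b => PposR A f k c b
  | Int.negSucc k, c, b => NnegR A f k c b

lemma inf_le_add_inf (F G : A → ℝ) (d : ℝ) (h : ∀ e, F e ≤ d + G e) :
    (⨅ e, F e) ≤ d + ⨅ e, G e := by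
  obtain ⟨e₀, he₀⟩ := Finite.exists_min G
  have hG : (⨅ e, G e) = G e₀ :=
    le_antisymm (ciInf_le ((Set.finite_range G).bddBelow) e₀) (le_ciInf he₀)
  rw [hG]
  exact (ciInf_le ((Set.finite_range F).bddBelow) e₀).trans (h e₀)

lemma le_add_ciInf' (a d : ℝ) (G : A → ℝ) (h : ∀ e, a ≤ d + G e) :
    a ≤ d + ⨅ e, G e := by
  obtain ⟨e₀, he₀⟩ := Finite.exists_min G
  have hG : (⨅ e, G e) = G e₀ :=
    le_antisymm (ciInf_le ((Set.finite_range G).bddBelow) e₀) (le_ciInf he₀)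
  rw [hG]; exact h e₀

variable (hf : ∀ x y : A, dist (f x) (f y) = dist (x : X) (y : X))

include hf

lemma PposR_step0 (k : ℕ) (c c₁ b : A) :
    PposR A f k c b ≤ dist (c : X) (c₁ : X) + PposR A f k c₁ b := by
  induction k generalizing c c₁ with
  | zero => exact dist_triangle _ _ _
  | succ k ih =>
    show (⨅ e : A, (dist (c : X) (f e) + PposR A f k e b))
      ≤ dist (c : X) (c₁ : X) + ⨅ e : A, (dist (c₁ : X) (f e) + PposR A f k e b)
    refine inf_le_add_inf A _ _ _ fun e => ?_
    have h1 := dist_triangle (c : X) (c₁ : X) (f e)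
    linarith

lemma NnegR_step0 (k : ℕ) (c c₁ b : A) :
    NnegR A f k c b ≤ dist (c : X) (c₁ : X) + NnegR A f k c₁ b := by
  induction k generalizing c c₁ with
  | zero =>
    show dist (f c) (b : X) ≤ _
    calc dist (f c) (b : X) ≤ dist (f c) (f c₁) + dist (f c₁) (b : X) := dist_triangle _ _ _
    _ = dist (c : X) (c₁ : X) + dist (f c₁) (b : X) := by rw [hf]
  | succ k ih =>
    show (⨅ e : A, (dist (f c) (e : X) + NnegR A f k e b))
      ≤ dist (c : X) (c₁ : X) + ⨅ e : A, (dist (f c₁) (e : X) + NnegR A f k e b)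
    refine inf_le_add_inf A _ _ _ fun e => ?_
    have h1 : dist (f c) (e : X) ≤ dist (f c) (f c₁) + dist (f c₁) (e : X) := dist_triangle _ _ _
    rw [hf] at h1
    linarith

lemma PposR_succ_le (k : ℕ) (c c₁ b : A) :
    PposR A f (k+1) c b ≤ dist (c : X) (f c₁) + PposR A f k c₁ b :=
  ciInf_le ((Set.finite_range _).bddBelow) c₁

lemma NnegR_succ_le (k : ℕ) (c c₁ b : A) :
    NnegR A f (k+1) c b ≤ dist (f c) (c₁ : X) + NnegR A f k c₁ b :=
  ciInf_le ((Set.finite_range _).bddBelow) c₁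

lemma PposR_shift_down (k : ℕ) (c c₁ b : A) :
    PposR A f k c b ≤ dist (f c) (c₁ : X) + PposR A f (k+1) c₁ b := by
  show PposR A f k c b ≤ dist (f c) (c₁ : X) + ⨅ e : A, (dist (c₁ : X) (f e) + PposR A f k e b)
  refine le_add_ciInf' A _ _ _ fun e => ?_
  have h0 : PposR A f k c b ≤ dist (c : X) (e : X) + PposR A f k e b := PposR_step0 A f hf k c e b
  have h1 : dist (c : X) (e : X) ≤ dist (f c) (c₁ : X) + dist (c₁ : X) (f e) := by
    calc dist (c : X) (e : X) = dist (f c) (f e) := (hf c e).symm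
    _ ≤ dist (f c) (c₁ : X) + dist (c₁ : X) (f e) := dist_triangle _ _ _
  linarith

lemma NnegR_shift_down (k : ℕ) (c c₁ b : A) :
    NnegR A f k c b ≤ dist (c : X) (f c₁) + NnegR A f (k+1) c₁ b := by
  show NnegR A f k c b ≤ dist (c : X) (f c₁) + ⨅ e : A, (dist (f c₁) (e : X) + NnegR A f k e b)
  refine le_add_ciInf' A _ _ _ fun e => ?_
  have h0 : NnegR A f k c b ≤ dist (c : X) (e : X) + NnegR A f k e b := NnegR_step0 A f hf k c e b
  have h1 : dist (c : X) (e : X) ≤ dist (c : X) (f c₁) + dist (f c₁) (e : X) := dist_triangle _ _ _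
  linarith

lemma PsiR_step0 (k : ℤ) (c c₁ b : A) :
    PsiR A f k c b ≤ dist (c : X) (c₁ : X) + PsiR A f k c₁ b := by
  match k with
  | Int.ofNat 0 => exact dist_triangle _ _ _
  | Int.ofNat (n+1) => exact PposR_step0 A f hf n c c₁ b
  | Int.negSucc n => exact NnegR_step0 A f hf n c c₁ b

lemma PsiR_stepP (k : ℤ) (c c₁ b : A) :
    PsiR A f (k+1) c b ≤ dist (c : X) (f c₁) + PsiR A f k c₁ b := by
  match k with
  | Int.ofNat 0 =>
    show PposR A f 0 c b ≤ dist (c : X) (f c₁) + dist (c₁ : X) (b : X)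
    calc dist (c : X) (f b) ≤ dist (c : X) (f c₁) + dist (f c₁) (f b) := dist_triangle _ _ _
    _ = dist (c : X) (f c₁) + dist (c₁ : X) (b : X) := by rw [hf]
  | Int.ofNat (n+1) =>
    show PposR A f (n+1) c b ≤ dist (c : X) (f c₁) + PposR A f n c₁ b
    exact PposR_succ_le A f hf n c c₁ b
  | Int.negSucc 0 =>
    show dist (c : X) (b : X) ≤ dist (c : X) (f c₁) + NnegR A f 0 c₁ b
    exact dist_triangle _ _ _
  | Int.negSucc (n+1) =>
    show NnegR A f n c b ≤ dist (c : X) (f c₁) + NnegR A f (n+1) c₁ b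
    exact NnegR_shift_down A f hf n c c₁ b

lemma PsiR_stepN (k : ℤ) (c c₁ b : A) :
    PsiR A f (k-1) c b ≤ dist (f c) (c₁ : X) + PsiR A f k c₁ b := by
  match k with
  | Int.ofNat 0 =>
    rw [show (Int.ofNat 0 : ℤ) - 1 = Int.negSucc 0 from by simp only [Int.ofNat_eq_natCast, Int.negSucc_eq]; omega]
    show NnegR A f 0 c b ≤ dist (f c) (c₁ : X) + dist (c₁ : X) (b : X)
    exact dist_triangle _ _ _
  | Int.ofNat 1 =>
    rw [show (Int.ofNat 1 : ℤ) - 1 = Int.ofNat 0 from by simp only [Int.ofNat_eq_natCast, Int.negSucc_eq]; omega]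
    show dist (c : X) (b : X) ≤ dist (f c) (c₁ : X) + PposR A f 0 c₁ b
    calc dist (c : X) (b : X) = dist (f c) (f b) := (hf c b).symm
    _ ≤ dist (f c) (c₁ : X) + dist (c₁ : X) (f b) := dist_triangle _ _ _
  | Int.ofNat (n+2) =>
    rw [show (Int.ofNat (n+2) : ℤ) - 1 = Int.ofNat (n+1) from by simp only [Int.ofNat_eq_natCast, Int.negSucc_eq]; omega]
    show PposR A f n c b ≤ dist (f c) (c₁ : X) + PposR A f (n+1) c₁ b
    exact PposR_shift_down A f hf n c c₁ b
  | Int.negSucc n =>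
    rw [show (Int.negSucc n : ℤ) - 1 = Int.negSucc (n+1) from by simp only [Int.ofNat_eq_natCast, Int.negSucc_eq]; omega]
    show NnegR A f (n+1) c b ≤ dist (f c) (c₁ : X) + NnegR A f n c₁ b
    exact NnegR_succ_le A f hf n c c₁ b

variable {δ : ℝ}

lemma PposR_ge (hδlb : ∀ x y : A, δ ≤ dist (x : X) (f y)) (k : ℕ) (c b : A) :
    δ * (k + 1) ≤ PposR A f k c b := by
  induction k generalizing c with
  | zero => simpa [PposR] using hδlb c b
  | succ k ih =>
    show _ ≤ ⨅ e : A, (dist (c : X) (f e) + PposR A f k e b)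
    refine le_ciInf fun e => ?_
    have h1 := hδlb c e
    have h2 := ih e
    push_cast at h2 ⊢
    nlinarith

lemma NnegR_ge (hδlb : ∀ x y : A, δ ≤ dist (x : X) (f y)) (k : ℕ) (c b : A) :
    δ * (k + 1) ≤ NnegR A f k c b := by
  induction k generalizing c with
  | zero =>
    have h := hδlb b c
    rw [dist_comm] at h
    simpa [NnegR] using h
  | succ k ih =>
    show _ ≤ ⨅ e : A, (dist (f c) (e : X) + NnegR A f k e b)
    refine le_ciInf fun e => ?_
    have h1 := hδlb e c
    rw [dist_comm] at h1
    have h2 := ih e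
    push_cast at h2 ⊢
    nlinarith

lemma PsiR_ge (hδlb : ∀ x y : A, δ ≤ dist (x : X) (f y))
    (k : ℤ) (hk : k ≠ 0) (c b : A) : δ * (|k| : ℤ) ≤ PsiR A f k c b := by
  match k with
  | Int.ofNat 0 => exact absurd rfl hk
  | Int.ofNat (n+1) =>
    have h := PposR_ge A f hf hδlb n c b
    have e : ((|Int.ofNat (n+1)| : ℤ) : ℝ) = (n : ℝ) + 1 := by
      simp only [Int.ofNat_eq_natCast]
      rw [abs_of_nonneg (by positivity)]
      push_cast; ring
    rw [e]
    exact h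
  | Int.negSucc n =>
    have h := NnegR_ge A f hf hδlb n c b
    have e : ((|Int.negSucc n| : ℤ) : ℝ) = (n : ℝ) + 1 := by
      have e' : (|Int.negSucc n| : ℤ) = (n : ℤ) + 1 := by
        rw [Int.negSucc_eq, abs_neg, abs_of_nonneg (by positivity)]
      rw [e']; push_cast; ring
    rw [e]
    exact h

omit hf

lemma rho_nonneg (s : ℕ) (p q : A × ZMod s) : 0 ≤ rho A f s p q := by
  unfold rho; split_ifs <;> positivity

lemma pathLen_nonneg (s : ℕ) (c : List (A × ZMod s)) : 0 ≤ pathLen A f s c := by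
  induction c with
  | nil => simp [pathLen]
  | cons p rest ih =>
    cases rest with
    | nil => simp [pathLen]
    | cons q rest' =>
      have h1 := rho_nonneg A f s p q
      show 0 ≤ rho A f s p q + pathLen A f s (q :: rest')
      have h2 : 0 ≤ pathLen A f s (q :: rest') := ih
      linarith

include hf

lemma chainLB (s : ℕ) (hs3 : 3 ≤ s) [NeZero s] :
    ∀ (c : List (A × ZMod s)), List.Chain' (stepAdm A s) c →
    ∀ p q : A × ZMod s, c.head? = some p → c.getLast? = some q →
    ∃ k : ℤ, ((k : ZMod s) = q.2 - p.2) ∧ PsiR A f k p.1 q.1 ≤ pathLen A f s c := by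
  have h10 : (1 : ZMod s) ≠ 0 := by
    intro h
    have : (s : ℕ) ∣ 1 := by
      have := (ZMod.natCast_eq_zero_iff 1 s).mp (by exact_mod_cast h)
      exact this
    have := Nat.le_of_dvd one_pos this
    omega
  have h20 : (2 : ZMod s) ≠ 0 := by
    intro h
    have : (s : ℕ) ∣ 2 := by
      have := (ZMod.natCast_eq_zero_iff 2 s).mp (by exact_mod_cast h)
      exact this
    have := Nat.le_of_dvd two_pos this
    omega
  intro c
  induction c with
  | nil => intro _ p q hp _; simp at hp
  | cons hd tl ih =>
    intro hchain p q hp hq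
    have hphd : hd = p := by simpa using hp
    cases tl with
    | nil =>
      have hqhd : hd = q := by simpa using hq
      refine ⟨0, by rw [← hqhd, ← hphd]; simp, ?_⟩
      rw [← hqhd, ← hphd]
      show PsiR A f (Int.ofNat 0) hd.1 hd.1 ≤ pathLen A f s [hd]
      simp [PsiR, pathLen]
    | cons q' rest =>
      rw [← hphd]
      unfold List.Chain' at hchain
      rw [List.isChain_cons_cons] at hchain
      obtain ⟨hstep, hchain'⟩ := hchain
      rw [List.getLast?_cons_cons] at hq
      obtain ⟨k', hcong, hle⟩ := ih hchain' q' q rfl hq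
      have hplen : pathLen A f s (hd :: q' :: rest) = rho A f s hd q' + pathLen A f s (q' :: rest) := rfl
      rcases hstep with h | h | h
      · have hrho : rho A f s hd q' = dist (hd.1 : X) (q'.1 : X) := by
          unfold rho; rw [if_pos h]
        refine ⟨k', by rw [hcong, h], ?_⟩
        calc PsiR A f k' hd.1 q.1 ≤ dist (hd.1 : X) (q'.1 : X) + PsiR A f k' q'.1 q.1 :=
              PsiR_step0 A f hf k' hd.1 q'.1 q.1
        _ ≤ dist (hd.1 : X) (q'.1 : X) + pathLen A f s (q' :: rest) := by linarith
        _ = pathLen A f s (hd :: q' :: rest) := by rw [hplen, hrho]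
      · have hne1 : q'.2 ≠ hd.2 := by
          rw [h]; intro hh
          exact h10 (by linear_combination hh)
        have hrho : rho A f s hd q' = dist (hd.1 : X) (f q'.1) := by
          unfold rho; rw [if_neg hne1, if_pos h]
        refine ⟨k' + 1, ?_, ?_⟩
        · push_cast
          rw [hcong, h]; ring
        · calc PsiR A f (k' + 1) hd.1 q.1
              ≤ dist (hd.1 : X) (f q'.1) + PsiR A f k' q'.1 q.1 :=
              PsiR_stepP A f hf k' hd.1 q'.1 q.1
          _ ≤ dist (hd.1 : X) (f q'.1) + pathLen A f s (q' :: rest) := by linarith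
          _ = pathLen A f s (hd :: q' :: rest) := by rw [hplen, hrho]
      · have hne1 : q'.2 ≠ hd.2 := by
          rw [h]; intro hh
          exact h10 (by linear_combination -hh)
        have hne2 : q'.2 ≠ hd.2 + 1 := by
          rw [h]; intro hh
          exact h20 (by linear_combination -hh)
        have hrho : rho A f s hd q' = dist (f hd.1) (q'.1 : X) := by
          unfold rho; rw [if_neg hne1, if_neg hne2, if_pos h]
        refine ⟨k' - 1, ?_, ?_⟩
        · push_cast
          rw [hcong, h]; ring
        · calc PsiR A f (k' - 1) hd.1 q.1
              ≤ dist (f hd.1) (q'.1 : X) + PsiR A f k' q'.1 q.1 :=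
              PsiR_stepN A f hf k' hd.1 q'.1 q.1
          _ ≤ dist (f hd.1) (q'.1 : X) + pathLen A f s (q' :: rest) := by linarith
          _ = pathLen A f s (hd :: q' :: rest) := by rw [hplen, hrho]

omit hf

lemma rho_shift (s : ℕ) (t : ZMod s) (p q : A × ZMod s) :
    rho A f s (p.1, p.2 + t) (q.1, q.2 + t) = rho A f s p q := by
  have e1 : (q.2 + t = p.2 + t) ↔ q.2 = p.2 := add_left_inj t
  have e2 : (q.2 + t = p.2 + t + 1) ↔ (q.2 = p.2 + 1) := by
    rw [add_right_comm]; exact add_left_inj t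
  have e3 : (q.2 + t = p.2 + t - 1) ↔ (q.2 = p.2 - 1) := by
    rw [show p.2 + t - 1 = (p.2 - 1) + t from by ring]; exact add_left_inj t
  unfold rho
  simp only [e1, e2, e3]

lemma stepAdm_shift (s : ℕ) (t : ZMod s) (p q : A × ZMod s) (h : stepAdm A s p q) :
    stepAdm A s (p.1, p.2 + t) (q.1, q.2 + t) := by
  rcases h with h | h | h
  · exact Or.inl (by simp only; rw [h])
  · refine Or.inr (Or.inl ?_)
    simp only
    rw [h]; ring
  · refine Or.inr (Or.inr ?_)
    simp only
    rw [h]; ring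

lemma pathLen_map (s : ℕ) (t : ZMod s) (c : List (A × ZMod s)) :
    pathLen A f s (c.map (fun p => (p.1, p.2 + t))) = pathLen A f s c := by
  induction c with
  | nil => rfl
  | cons p rest ih =>
    cases rest with
    | nil => rfl
    | cons q rest' =>
      show rho A f s (p.1, p.2 + t) (q.1, q.2 + t) + _ = rho A f s p q + _
      rw [rho_shift]
      exact congrArg (fun z => rho A f s p q + z) ih

lemma exists_chain (s : ℕ) (b : A) :
    ∀ (n : ℕ) (a : A) (x : ZMod s), ∃ c : List (A × ZMod s),
      c.head? = some (a, x) ∧ c.getLast? = some (b, x + n) ∧ List.Chain' (stepAdm A s) c := by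
  intro n
  induction n with
  | zero =>
    intro a x
    refine ⟨[(a, x), (b, x)], by simp, by simp, ?_⟩
    unfold List.Chain'
    rw [List.isChain_cons_cons]
    exact ⟨Or.inl rfl, List.isChain_singleton _⟩
  | succ n ih =>
    intro a x
    obtain ⟨c, hh, hl, hc⟩ := ih a (x + 1)
    refine ⟨(a, x) :: c, ?_, ?_, ?_⟩
    · simp
    · cases c with
      | nil => simp at hh
      | cons c0 ctl =>
        rw [List.getLast?_cons_cons, hl]
        congr 2
        push_cast
        ring
    · refine hc.cons fun y hy => ?_
      rw [hh] at hy
      simp at hy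
      subst hy
      exact Or.inr (Or.inl rfl)

end AuxRohlin

/-- The construction for Rohlin's Lemma for isometries: let `A` be a nonempty finite subset
of a metric space `X`, `f : A → X` a partial isometry with
`δ = min {d(x, f y) : x, y ∈ A} > 0` and `Δ = diam (A ∪ f[A])`, and let `F = ZMod s` be a
cyclic order of size `s` with `δ·(s−2) ≥ Δ`.  Then for the weighted-graph metric `D` on
`B = A × F` one has `D(a•x, b•x) = d(a,b)` and `D(a•x, b•x⁺) = d(a, f b)`, and the shift
`g(a•x) = a•x⁺` is an isometry of `(B, D)` with `g ^ s = id`. -/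
theorem stmt19 {X : Type*} [MetricSpace X] (A : Set X) [Fintype A] [Nonempty A]
    (f : A → X) (hf : ∀ x y : A, dist (f x) (f y) = dist (x : X) (y : X))
    (δ Δ : ℝ)
    (hδ : IsLeast {d : ℝ | ∃ x y : A, d = dist (x : X) (f y)} δ) (hδpos : 0 < δ)
    (hΔ : Δ = Metric.diam (A ∪ Set.range f))
    (s : ℕ) [NeZero s] (hs : Δ ≤ δ * ((s : ℝ) - 2)) :
    (∀ (a b : A) (x : ZMod s), graphDist A f s (a, x) (b, x) = dist (a : X) (b : X)) ∧
    (∀ (a b : A) (x : ZMod s), graphDist A f s (a, x) (b, x + 1) = dist (a : X) (f b)) ∧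
    (∀ p q : A × ZMod s,
      graphDist A f s (p.1, p.2 + 1) (q.1, q.2 + 1) = graphDist A f s p q) ∧
    (fun p : A × ZMod s => (p.1, p.2 + 1))^[s] = id := by
  classical
  have hδlb : ∀ x y : A, δ ≤ dist (x : X) (f y) := fun x y => hδ.2 ⟨x, y, rfl⟩
  have hfin : (A ∪ Set.range f).Finite := A.toFinite.union (Set.finite_range f)
  have hbd := hfin.isBounded
  have hΔ1 : ∀ x y : A, dist (x : X) (y : X) ≤ Δ := fun x y => by
    rw [hΔ]; exact Metric.dist_le_diam_of_mem hbd (Or.inl x.2) (Or.inl y.2)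
  have hΔ2 : ∀ x y : A, dist (x : X) (f y) ≤ Δ := fun x y => by
    rw [hΔ]; exact Metric.dist_le_diam_of_mem hbd (Or.inl x.2) (Or.inr ⟨y, rfl⟩)
  have hs3 : 3 ≤ s := by
    obtain ⟨x₀, y₀, hx⟩ := hδ.1
    have h1 : δ ≤ Δ := hx ▸ hΔ2 x₀ y₀
    have h2 : (1 : ℝ) ≤ (s : ℝ) - 2 := by nlinarith
    have h3 : (3 : ℝ) ≤ (s : ℝ) := by linarith
    exact_mod_cast h3
  -- bounded below
  have hbdd : ∀ p q : A × ZMod s, BddBelow {r : ℝ | ∃ c : List (A × ZMod s),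
      c.head? = some p ∧ c.getLast? = some q ∧
      List.Chain' (stepAdm A s) c ∧ pathLen A f s c = r} := by
    intro p q
    refine ⟨0, fun r hr => ?_⟩
    obtain ⟨c, _, _, _, hc⟩ := hr
    exact hc ▸ pathLen_nonneg A f s c
  have hne : ∀ p q : A × ZMod s, Set.Nonempty {r : ℝ | ∃ c : List (A × ZMod s),
      c.head? = some p ∧ c.getLast? = some q ∧
      List.Chain' (stepAdm A s) c ∧ pathLen A f s c = r} := by
    intro p q
    obtain ⟨c, h1, h2, h3⟩ := exists_chain A s q.1 (q.2 - p.2).val p.1 p.2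
    have hx : p.2 + ((q.2 - p.2).val : ZMod s) = q.2 := by
      rw [ZMod.natCast_val, ZMod.cast_id]
      ring
    rw [hx] at h2
    exact ⟨pathLen A f s c, c, h1, by simpa using h2, h3, rfl⟩
  have h10 : (1 : ZMod s) ≠ 0 := by
    intro h
    have h' := (ZMod.natCast_eq_zero_iff 1 s).mp (by exact_mod_cast h)
    have := Nat.le_of_dvd one_pos h'
    omega
  refine ⟨?_, ?_, ?_, ?_⟩
  · -- D(a•x, b•x) = d(a,b)
    intro a b x
    have hpath : pathLen A f s [(a, x), (b, x)] = dist (a : X) (b : X) := by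
      show rho A f s (a, x) (b, x) + pathLen A f s [(b, x)] = _
      have : rho A f s (a, x) (b, x) = dist (a : X) (b : X) := by
        unfold rho; rw [if_pos rfl]
      rw [this]
      show dist (a : X) (b : X) + 0 = _
      ring
    have hmem : dist (a : X) (b : X) ∈ {r : ℝ | ∃ c : List (A × ZMod s),
        c.head? = some (a, x) ∧ c.getLast? = some (b, x) ∧
        List.Chain' (stepAdm A s) c ∧ pathLen A f s c = r} := by
      refine ⟨[(a, x), (b, x)], by simp, by simp, ?_, hpath⟩
      unfold List.Chain'
      rw [List.isChain_cons_cons]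
      exact ⟨Or.inl rfl, List.isChain_singleton _⟩
    refine le_antisymm (csInf_le (hbdd _ _) hmem) (le_csInf ⟨_, hmem⟩ ?_)
    rintro r ⟨c, hh, hl, hc, rfl⟩
    obtain ⟨k, hcong, hle⟩ := chainLB A f hf s hs3 c hc (a, x) (b, x) hh hl
    by_cases hk : k = 0
    · subst hk
      exact le_trans (le_of_eq rfl) hle
    · have hdvd : (s : ℤ) ∣ k := by
        rw [← ZMod.intCast_zmod_eq_zero_iff_dvd]
        rw [hcong]; ring
      have habs : (s : ℤ) ≤ |k| := Int.le_of_dvd (abs_pos.mpr hk) ((dvd_abs _ _).mpr hdvd)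
      have habsR : (s : ℝ) ≤ ((|k| : ℤ) : ℝ) := by exact_mod_cast habs
      have h5 := PsiR_ge A f hf hδlb k hk a b
      have h6 := hΔ1 a b
      have h7 : dist (a : X) (b : X) ≤ PsiR A f k a b := by nlinarith
      linarith
  · -- D(a•x, b•(x+1)) = d(a, f b)
    intro a b x
    have hstep : stepAdm A s (a, x) (b, x + 1) := Or.inr (Or.inl rfl)
    have hx1 : x + 1 ≠ x := by
      intro h
      exact h10 (by linear_combination h)
    have hrho : rho A f s (a, x) (b, x + 1) = dist (a : X) (f b) := by
      unfold rho; rw [if_neg hx1, if_pos rfl]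
    have hpath : pathLen A f s [(a, x), (b, x + 1)] = dist (a : X) (f b) := by
      show rho A f s (a, x) (b, x + 1) + pathLen A f s [(b, x + 1)] = _
      rw [hrho]
      show dist (a : X) (f b) + 0 = _
      ring
    have hmem : dist (a : X) (f b) ∈ {r : ℝ | ∃ c : List (A × ZMod s),
        c.head? = some (a, x) ∧ c.getLast? = some (b, x + 1) ∧
        List.Chain' (stepAdm A s) c ∧ pathLen A f s c = r} := by
      refine ⟨[(a, x), (b, x + 1)], by simp, by simp, ?_, hpath⟩
      unfold List.Chain'
      rw [List.isChain_cons_cons]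
      exact ⟨hstep, List.isChain_singleton _⟩
    refine le_antisymm (csInf_le (hbdd _ _) hmem) (le_csInf ⟨_, hmem⟩ ?_)
    rintro r ⟨c, hh, hl, hc, rfl⟩
    obtain ⟨k, hcong, hle⟩ := chainLB A f hf s hs3 c hc (a, x) (b, x + 1) hh hl
    by_cases hk : k = 1
    · subst hk
      have : PsiR A f 1 a b = dist (a : X) (f b) := rfl
      linarith
    · have hdvd : (s : ℤ) ∣ (k - 1) := by
        rw [← ZMod.intCast_zmod_eq_zero_iff_dvd]
        push_cast
        rw [hcong]; ring
      have habs : (s : ℤ) ≤ |k - 1| :=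
        Int.le_of_dvd (abs_pos.mpr (sub_ne_zero.mpr hk)) ((dvd_abs _ _).mpr hdvd)
      have habs2 : (s : ℤ) - 1 ≤ |k| := by
        have h8 : |k - 1| ≤ |k| + 1 := by
          calc |k - 1| = |k + (-1)| := by ring_nf
          _ ≤ |k| + |(-1 : ℤ)| := abs_add_le _ _
          _ = |k| + 1 := by norm_num
        omega
      have hk0 : k ≠ 0 := by
        intro h0
        rw [h0] at habs
        norm_num at habs
        omega
      have habsR : (s : ℝ) - 1 ≤ ((|k| : ℤ) : ℝ) := by exact_mod_cast habs2
      have h5 := PsiR_ge A f hf hδlb k hk0 a b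
      have h6 := hΔ2 a b
      have h7 : dist (a : X) (f b) ≤ PsiR A f k a b := by nlinarith
      linarith
  · -- shift invariance
    have hshift : ∀ (t : ZMod s) (p q : A × ZMod s),
        graphDist A f s (p.1, p.2 + t) (q.1, q.2 + t) ≤ graphDist A f s p q := by
      intro t p q
      refine csInf_le_csInf (hbdd _ _) (hne p q) ?_
      rintro r ⟨c, hh, hl, hc, rfl⟩
      refine ⟨c.map (fun p => (p.1, p.2 + t)), ?_, ?_, ?_, (pathLen_map A f s t c).symm ▸ rfl⟩
      · rw [List.head?_map, hh]; rfl
      · rw [List.getLast?_map, hl]; rfl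
      · unfold List.Chain' at hc ⊢
        rw [List.isChain_map]
        exact hc.imp fun p q h => stepAdm_shift A s t p q h
    intro p q
    refine le_antisymm (hshift 1 p q) ?_
    have h := hshift (-1) (p.1, p.2 + 1) (q.1, q.2 + 1)
    simpa using h
  · -- iteration
    have hiter : ∀ (n : ℕ) (p : A × ZMod s),
        (fun p : A × ZMod s => (p.1, p.2 + 1))^[n] p = (p.1, p.2 + (n : ZMod s)) := by
      intro n
      induction n with
      | zero => intro p; simp
      | succ n ih =>
        intro p
        rw [Function.iterate_succ_apply', ih]
        simp only
        congr 1
        push_cast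
        ring
    funext p
    rw [hiter s p]
    simp [ZMod.natCast_self]
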